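/- arXiv:1912.04582 — 2 statements merged into one kernel-verified Lean document; each statement's English description precedes it below -/
import Mathlib

section
/- Eckart–Young theorem (Frobenius norm): Let A be an m×n real matrix with singular value decomposition A = Σ_{k=1}^{r} σ_k u_k v_kᵀ, σ_1 ≥ σ_2 ≥ ⋯ ≥ σ_r > 0. For any r' < r, the matrix B = Σ_{k=1}^{r'} σ_k u_k v_kᵀ minimizes ‖A - X‖_F over all matrices X of rank at most r', and min ‖A - X‖_F² = Σ_{k=r'+1}^{r} σ_k². -/
open Matrix Finset
open scoped RealInnerProductSpace

/-- Squared Frobenius norm of a real matrix. -/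
def frobSq {m n : ℕ} (M : Matrix (Fin m) (Fin n) ℝ) : ℝ :=
  ∑ i, ∑ j, (M i j) ^ 2

lemma cross_sum {r m : ℕ} (u : Fin r → Fin m → ℝ)
    (hu : ∀ k l : Fin r, (∑ i, u k i * u l i) = if k = l then 1 else 0)
    (a b : Fin r → ℝ) :
    (∑ p, (∑ k, a k * u k p) * (∑ l, b l * u l p)) = ∑ k, a k * b k := by
  have h1 : ∀ p : Fin m, (∑ k, a k * u k p) * (∑ l, b l * u l p)
      = ∑ k, ∑ l, a k * b l * (u k p * u l p) := by
    intro p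
    rw [Finset.sum_mul_sum]
    exact Finset.sum_congr rfl fun k _ => Finset.sum_congr rfl fun l _ => by ring
  calc (∑ p, (∑ k, a k * u k p) * (∑ l, b l * u l p))
      = ∑ k, ∑ l, a k * b l * ∑ p, u k p * u l p := by
        simp_rw [h1]
        rw [Finset.sum_comm]
        refine Finset.sum_congr rfl fun k _ => ?_
        rw [Finset.sum_comm]
        exact Finset.sum_congr rfl fun l _ => by rw [Finset.mul_sum]
    _ = ∑ k, a k * b k := by
        simp [hu, Finset.sum_ite_eq']

lemma filter_lt_eq_map (N a : ℕ) (h : a ≤ N) :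
    (Finset.univ.filter (fun i : Fin N => (i : ℕ) < a))
      = Finset.univ.map (Fin.castLEEmb h) := by
  ext i
  simp [Fin.castLEEmb, Fin.castLE]
  constructor
  · intro hi; exact ⟨⟨i, hi⟩, rfl⟩
  · rintro ⟨k, rfl⟩; exact k.2

lemma card_filter_lt (N a : ℕ) (h : a ≤ N) :
    (Finset.univ.filter (fun i : Fin N => (i : ℕ) < a)).card = a := by
  rw [filter_lt_eq_map N a h]; simp

lemma comb {r : ℕ} (σ : Fin r → ℝ) (hσpos : ∀ k, 0 < σ k)
    (hσmono : ∀ k l : Fin r, k ≤ l → σ l ≤ σ k)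
    (r' : ℕ) (hr' : r' < r) (t : Fin r → ℝ)
    (ht0 : ∀ k, 0 ≤ t k) (ht1 : ∀ k, t k ≤ 1)
    (hsum : ∑ k, (1 - t k) ≤ (r' : ℝ)) :
    (∑ k : Fin r, if r' ≤ (k : ℕ) then σ k ^ 2 else 0) ≤ ∑ k, σ k ^ 2 * t k := by
  classical
  set K0 : Fin r := ⟨r', hr'⟩ with hK0
  set c : ℝ := σ K0 ^ 2 with hc
  have hc0 : 0 ≤ c := sq_nonneg _
  set P : Finset (Fin r) := Finset.univ.filter (fun k => r' ≤ (k : ℕ)) with hP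
  set Q : Finset (Fin r) := Finset.univ.filter (fun k => ¬ r' ≤ (k : ℕ)) with hQ
  have hQcard : Q.card = r' := by
    have : Q = Finset.univ.filter (fun k : Fin r => (k : ℕ) < r') := by
      ext k; simp [hQ, Nat.not_le]
    rw [this]; exact card_filter_lt r r' hr'.le
  have hPb : ∀ k ∈ P, σ k ^ 2 ≤ c := by
    intro k hk
    have hk' : K0 ≤ k := by
      simp only [hP, mem_filter] at hk
      exact hk.2
    exact pow_le_pow_left₀ (hσpos k).le (hσmono K0 k hk') 2
  have hQb : ∀ k ∈ Q, c ≤ σ k ^ 2 := by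
    intro k hk
    have hk' : k ≤ K0 := by
      simp only [hQ, mem_filter, Nat.not_le] at hk
      exact le_of_lt hk.2
    exact pow_le_pow_left₀ (hσpos K0).le (hσmono k K0 hk') 2
  have hLHS : (∑ k : Fin r, if r' ≤ (k : ℕ) then σ k ^ 2 else 0) = ∑ k ∈ P, σ k ^ 2 := by
    rw [hP, Finset.sum_filter]
  have hRHS : (∑ k, σ k ^ 2 * t k) = ∑ k ∈ P, σ k ^ 2 * t k + ∑ k ∈ Q, σ k ^ 2 * t k := by
    rw [hP, hQ]; exact (Finset.sum_filter_add_sum_filter_not _ _ _).symm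
  rw [hLHS, hRHS]
  have step1 : ∑ k ∈ P, σ k ^ 2 ≤ ∑ k ∈ P, σ k ^ 2 * t k + c * ∑ k ∈ P, (1 - t k) := by
    rw [Finset.mul_sum, ← Finset.sum_add_distrib]
    refine Finset.sum_le_sum fun k hk => ?_
    have h1 : σ k ^ 2 * (1 - t k) ≤ c * (1 - t k) :=
      mul_le_mul_of_nonneg_right (hPb k hk) (by linarith [ht1 k])
    nlinarith [h1]
  have step2 : c * ∑ k ∈ P, (1 - t k) ≤ c * ((r' : ℝ) - ∑ k ∈ Q, (1 - t k)) := by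
    apply mul_le_mul_of_nonneg_left _ hc0
    have h : ∑ k ∈ P, (1 - t k) + ∑ k ∈ Q, (1 - t k) = ∑ k, (1 - t k) := by
      rw [hP, hQ]; exact Finset.sum_filter_add_sum_filter_not _ _ _
    linarith [hsum, h]
  have step3 : c * ((r' : ℝ) - ∑ k ∈ Q, (1 - t k)) = c * ∑ k ∈ Q, t k := by
    congr 1
    rw [Finset.sum_sub_distrib, Finset.sum_const, hQcard]
    simp
  have step4 : c * ∑ k ∈ Q, t k ≤ ∑ k ∈ Q, σ k ^ 2 * t k := by
    rw [Finset.mul_sum]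
    exact Finset.sum_le_sum fun k hk => mul_le_mul_of_nonneg_right (hQb k hk) (ht0 k)
  linarith

lemma frob_of_sum {m n r : ℕ} (u : Fin r → Fin m → ℝ) (v : Fin r → Fin n → ℝ)
    (hu : ∀ k l : Fin r, (∑ i, u k i * u l i) = if k = l then 1 else 0)
    (hv : ∀ k l : Fin r, (∑ j, v k j * v l j) = if k = l then 1 else 0)
    (c : Fin r → ℝ) (M : Matrix (Fin m) (Fin n) ℝ)
    (hM : ∀ i j, M i j = ∑ k, c k * u k i * v k j) :
    frobSq M = ∑ k, c k ^ 2 := by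
  have hrow : ∀ i : Fin m, (∑ j, (M i j) ^ 2) = ∑ k, (c k * u k i) ^ 2 := by
    intro i
    have h1 : ∀ j, M i j = ∑ k, (c k * u k i) * v k j := by
      intro j; rw [hM]
    calc (∑ j, (M i j) ^ 2)
        = ∑ j, (∑ k, (c k * u k i) * v k j) * (∑ l, (c l * u l i) * v l j) := by
          refine Finset.sum_congr rfl fun j _ => ?_
          rw [h1 j, pow_two]
      _ = ∑ k, (c k * u k i) * (c k * u k i) := cross_sum v hv _ _
      _ = ∑ k, (c k * u k i) ^ 2 := by
          exact Finset.sum_congr rfl fun k _ => (pow_two _).symm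
  calc frobSq M = ∑ i, ∑ k, (c k * u k i) ^ 2 := Finset.sum_congr rfl fun i _ => hrow i
    _ = ∑ k, c k ^ 2 * ∑ i, u k i * u k i := by
        rw [Finset.sum_comm]
        refine Finset.sum_congr rfl fun k _ => ?_
        rw [Finset.mul_sum]
        exact Finset.sum_congr rfl fun i _ => by ring
    _ = ∑ k, c k ^ 2 := by
        refine Finset.sum_congr rfl fun k _ => ?_
        rw [hu k k, if_pos rfl, mul_one]

/-- **Eckart–Young theorem (Frobenius norm).** Let `A = Σ_{k<r} σ_k u_k v_kᵀ`
be an SVD with `σ_1 ≥ ⋯ ≥ σ_r > 0` and orthonormal `u_k`, `v_k`. For `r' < r`,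
the truncation `B = Σ_{k<r'} σ_k u_k v_kᵀ` has rank at most `r'`, minimizes the
Frobenius distance to `A` among all matrices of rank at most `r'`, and
`‖A - B‖_F² = Σ_{k≥r'} σ_k²`. -/
theorem eckart_young (m n r : ℕ) (σ : Fin r → ℝ)
    (hσpos : ∀ k, 0 < σ k)
    (hσmono : ∀ k l : Fin r, k ≤ l → σ l ≤ σ k)
    (u : Fin r → Fin m → ℝ) (v : Fin r → Fin n → ℝ)
    (hu : ∀ k l : Fin r, (∑ i, u k i * u l i) = if k = l then 1 else 0)
    (hv : ∀ k l : Fin r, (∑ j, v k j * v l j) = if k = l then 1 else 0)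
    (A B : Matrix (Fin m) (Fin n) ℝ)
    (hA : ∀ i j, A i j = ∑ k : Fin r, σ k * u k i * v k j)
    (r' : ℕ) (hr' : r' < r)
    (hB : ∀ i j, B i j = ∑ k : Fin r, if (k : ℕ) < r' then σ k * u k i * v k j else 0) :
    B.rank ≤ r' ∧
    (∀ X : Matrix (Fin m) (Fin n) ℝ, X.rank ≤ r' →
      frobSq (A - B) ≤ frobSq (A - X)) ∧
    frobSq (A - B) = ∑ k : Fin r, if r' ≤ (k : ℕ) then σ k ^ 2 else 0 := by
  classical
  -- A − B as a c-weighted sum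
  have hABentry : ∀ i j, (A - B) i j
      = ∑ k : Fin r, (if (k : ℕ) < r' then 0 else σ k) * u k i * v k j := by
    intro i j
    simp only [Matrix.sub_apply, hA i j, hB i j, ← Finset.sum_sub_distrib]
    refine Finset.sum_congr rfl fun k _ => ?_
    split_ifs <;> ring
  -- Part 3
  have part3 : frobSq (A - B) = ∑ k : Fin r, if r' ≤ (k : ℕ) then σ k ^ 2 else 0 := by
    rw [frob_of_sum u v hu hv _ _ hABentry]
    refine Finset.sum_congr rfl fun k _ => ?_
    rcases lt_or_ge (k : ℕ) r' with h | h
    · rw [if_pos h, if_neg (by omega)]; ring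
    · rw [if_neg (by omega), if_pos h]
  -- Part 1: rank
  have part1 : B.rank ≤ r' := by
    have hBfact : B
        = (Matrix.of fun i (k : Fin r') =>
            σ (Fin.castLE hr'.le k) * u (Fin.castLE hr'.le k) i)
          * (Matrix.of fun (k : Fin r') j => v (Fin.castLE hr'.le k) j) := by
      ext i j
      rw [Matrix.mul_apply, hB]
      rw [← Finset.sum_filter, filter_lt_eq_map r r' hr'.le, Finset.sum_map]
      refine Finset.sum_congr rfl fun k _ => ?_
      simp [Fin.castLEEmb, mul_assoc]
    rw [hBfact]
    refine le_trans (Matrix.rank_mul_le_left _ _) ?_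
    simpa using Matrix.rank_le_card_width
      (Matrix.of fun i (k : Fin r') =>
        σ (Fin.castLE hr'.le k) * u (Fin.castLE hr'.le k) i)
  refine ⟨part1, ?_, part3⟩
  -- Part 2: minimality
  intro X hX
  -- Euclidean space setup
  have inner_eq : ∀ x y : EuclideanSpace ℝ (Fin n), (inner ℝ x y : ℝ) = ∑ j, x j * y j := by
    intro x y
    simp [PiLp.inner_apply, RCLike.inner_apply, conj_trivial, mul_comm]
  set f : EuclideanSpace ℝ (Fin n) →ₗ[ℝ] (Fin m → ℝ) :=
    X.mulVecLin ∘ₗ (WithLp.linearEquiv 2 ℝ (Fin n → ℝ)).toLinearMap with hf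
  set K := LinearMap.ker f with hK
  set d := Module.finrank ℝ K with hd
  have hrange : LinearMap.range f = LinearMap.range X.mulVecLin := by
    rw [hf, LinearMap.range_comp, LinearEquiv.range, Submodule.map_top]
  have hrn : X.rank + d = n := by
    have h := LinearMap.finrank_range_add_finrank_ker f
    rw [hrange] at h
    simpa [Matrix.rank, hd, hK] using h
  have hnd : n ≤ r' + d := by omega
  have hdn : d ≤ n := by omega
  -- orthonormal family in the kernel
  set w : Fin d → EuclideanSpace ℝ (Fin n) :=
    fun i => ((stdOrthonormalBasis ℝ K) i : EuclideanSpace ℝ (Fin n)) with hw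
  have hw_on : Orthonormal ℝ w :=
    ((stdOrthonormalBasis ℝ K).orthonormal).comp_linearIsometry K.subtypeₗᵢ
  have hw_mem : ∀ i, w i ∈ K := fun i => ((stdOrthonormalBasis ℝ K) i).2
  set V0 : Fin n → EuclideanSpace ℝ (Fin n) :=
    fun i => if h : (i : ℕ) < d then w ⟨i, h⟩ else 0 with hV0def
  have hV0 : Orthonormal ℝ (({i : Fin n | (i : ℕ) < d}).restrict V0) := by
    have heq : (({i : Fin n | (i : ℕ) < d}).restrict V0)
        = w ∘ (fun j : {i : Fin n | (i : ℕ) < d} => (⟨((j : Fin n) : ℕ), j.2⟩ : Fin d)) := by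
      funext j
      simp only [Set.restrict_apply, hV0def, Function.comp_apply]
      have hj : ((j : Fin n) : ℕ) < d := j.2
      exact dif_pos hj
    rw [heq]
    refine hw_on.comp _ (fun a c hac => ?_)
    have h1 : ((a : Fin n) : ℕ) = ((c : Fin n) : ℕ) := congrArg (fun x : Fin d => x.val) hac
    exact Subtype.ext (Fin.ext h1)
  obtain ⟨b, hb⟩ := hV0.exists_orthonormalBasis_extension_of_card_eq
    (by simp)
  -- kernel property of b on small indices
  have hbK : ∀ i : Fin n, (i : ℕ) < d → ∀ p, (∑ j, X p j * b i j) = 0 := by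
    intro i hi p
    have h1 : b i ∈ K := by
      rw [hb i hi]
      simp only [hV0def]
      rw [dif_pos hi]
      exact hw_mem _
    have h2 : f (b i) = 0 := h1
    have h3 := congrFun h2 p
    simpa [hf, Matrix.mulVecLin_apply, Matrix.mulVec, dotProduct] using h3
  -- Parseval
  have hpar : ∀ x : EuclideanSpace ℝ (Fin n),
      (∑ j, x j * x j) = ∑ i, (∑ j, x j * b i j) * (∑ j, b i j * x j) := by
    intro x
    rw [← inner_eq x x, ← b.sum_inner_mul_inner x x]
    exact Finset.sum_congr rfl fun i _ => by rw [inner_eq, inner_eq]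
  -- Frobenius norm via the basis b
  have hfrobM : ∀ M : Matrix (Fin m) (Fin n) ℝ,
      frobSq M = ∑ i : Fin n, ∑ p : Fin m, (∑ j, M p j * b i j) ^ 2 := by
    intro M
    have hrow : ∀ p : Fin m,
        (∑ j, (M p j) ^ 2) = ∑ i : Fin n, (∑ j, M p j * b i j) ^ 2 := by
      intro p
      have h := hpar (WithLp.toLp 2 (fun j => M p j))
      calc (∑ j, (M p j) ^ 2) = ∑ j, M p j * M p j := by
            exact Finset.sum_congr rfl fun j _ => pow_two _
        _ = ∑ i, (∑ j, M p j * b i j) * (∑ j, b i j * M p j) := h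
        _ = ∑ i, (∑ j, M p j * b i j) ^ 2 := by
            refine Finset.sum_congr rfl fun i _ => ?_
            rw [pow_two]
            congr 1
            exact Finset.sum_congr rfl fun j _ => mul_comm _ _
    calc frobSq M = ∑ p, ∑ i : Fin n, (∑ j, M p j * b i j) ^ 2 :=
          Finset.sum_congr rfl fun p _ => hrow p
      _ = ∑ i : Fin n, ∑ p, (∑ j, M p j * b i j) ^ 2 := Finset.sum_comm
  -- set up the coefficients
  set F : Finset (Fin n) := Finset.univ.filter (fun i => (i : ℕ) < d) with hF
  set ip : Fin r → Fin n → ℝ := fun k i => ∑ j, v k j * b i j with hip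
  set t : Fin r → ℝ := fun k => ∑ i ∈ F, (ip k i) ^ 2 with htdef
  -- Parseval for the v's
  have hparv : ∀ k, (∑ i : Fin n, (ip k i) ^ 2) = 1 := by
    intro k
    have h := hpar (WithLp.toLp 2 (fun j => v k j))
    calc (∑ i : Fin n, (ip k i) ^ 2)
        = ∑ i : Fin n, (∑ j, v k j * b i j) * (∑ j, b i j * v k j) := by
          refine Finset.sum_congr rfl fun i _ => ?_
          simp only [hip]
          rw [pow_two]
          congr 1
          exact Finset.sum_congr rfl fun j _ => mul_comm _ _
      _ = ∑ j, v k j * v k j := h.symm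
      _ = 1 := by rw [hv k k, if_pos rfl]
  have ht0 : ∀ k, 0 ≤ t k := fun k => Finset.sum_nonneg fun i _ => sq_nonneg _
  have ht1 : ∀ k, t k ≤ 1 := by
    intro k
    rw [← hparv k]
    exact Finset.sum_le_sum_of_subset_of_nonneg (Finset.filter_subset _ _)
      (fun i _ _ => sq_nonneg _)
  -- Bessel for each b i
  have hvon : Orthonormal ℝ (fun k => WithLp.toLp 2 (v k)) := by
    rw [orthonormal_iff_ite]
    intro k l
    rw [inner_eq]
    exact hv k l
  have hBessel : ∀ i : Fin n, (∑ k : Fin r, (ip k i) ^ 2) ≤ 1 := by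
    intro i
    have h := hvon.sum_inner_products_le (x := b i) (s := Finset.univ)
    have hb1 : ‖b i‖ = 1 := b.orthonormal.1 i
    calc (∑ k : Fin r, (ip k i) ^ 2)
        = ∑ k : Fin r, ‖(inner ℝ (WithLp.toLp 2 (v k)) (b i) : ℝ)‖ ^ 2 := by
          refine Finset.sum_congr rfl fun k _ => ?_
          rw [inner_eq, Real.norm_eq_abs, sq_abs]
      _ ≤ ‖b i‖ ^ 2 := h
      _ = 1 := by rw [hb1]; norm_num
  -- the deficiency sum
  have hsum : (∑ k, (1 - t k)) ≤ (r' : ℝ) := by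
    set F' : Finset (Fin n) := Finset.univ.filter (fun i => ¬ (i : ℕ) < d) with hF'
    have hsplit : ∀ k, 1 - t k = ∑ i ∈ F', (ip k i) ^ 2 := by
      intro k
      have h : t k + ∑ i ∈ F', (ip k i) ^ 2 = 1 := by
        have h0 := Finset.sum_filter_add_sum_filter_not Finset.univ
          (fun i : Fin n => (i : ℕ) < d) (fun i => (ip k i) ^ 2)
        exact h0.trans (hparv k)
      linarith
    have hcard : F'.card = n - d := by
      have h : F.card + F'.card = n := by
        have h0 := Finset.card_filter_add_card_filter_not
          (s := (Finset.univ : Finset (Fin n))) (p := fun i : Fin n => (i : ℕ) < d)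
        simpa [hF, hF'] using h0
      have h2 : F.card = d := card_filter_lt n d hdn
      omega
    calc (∑ k, (1 - t k)) = ∑ k, ∑ i ∈ F', (ip k i) ^ 2 :=
          Finset.sum_congr rfl fun k _ => hsplit k
      _ = ∑ i ∈ F', ∑ k, (ip k i) ^ 2 := Finset.sum_comm
      _ ≤ ∑ i ∈ F', (1 : ℝ) := Finset.sum_le_sum fun i _ => hBessel i
      _ = (F'.card : ℝ) := by rw [Finset.sum_const, nsmul_eq_mul, mul_one]
      _ ≤ (r' : ℝ) := by
          rw [hcard]
          exact_mod_cast Nat.cast_le.mpr (by omega : n - d ≤ r')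
  -- A acting on b i
  have hact : ∀ (i : Fin n) (p : Fin m),
      (∑ j, A p j * b i j) = ∑ k, (σ k * ip k i) * u k p := by
    intro i p
    calc (∑ j, A p j * b i j)
        = ∑ j, ∑ k, σ k * u k p * v k j * b i j := by
          refine Finset.sum_congr rfl fun j _ => ?_
          rw [hA p j, Finset.sum_mul]
      _ = ∑ k, ∑ j, σ k * u k p * v k j * b i j := Finset.sum_comm
      _ = ∑ k, (σ k * ip k i) * u k p := by
          refine Finset.sum_congr rfl fun k _ => ?_
          have h4 : (σ k * ∑ j, v k j * b i j) * u k p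
              = ∑ j, σ k * u k p * v k j * b i j := by
            rw [Finset.mul_sum, Finset.sum_mul]
            exact Finset.sum_congr rfl fun j _ => by ring
          simp only [hip]
          exact h4.symm
  -- the key inequality
  have key : (∑ k, σ k ^ 2 * t k) ≤ frobSq (A - X) := by
    rw [hfrobM (A - X)]
    have h1 : (∑ i ∈ F, ∑ p, (∑ j, (A - X) p j * b i j) ^ 2)
        ≤ ∑ i : Fin n, ∑ p, (∑ j, (A - X) p j * b i j) ^ 2 :=
      Finset.sum_le_sum_of_subset_of_nonneg (Finset.filter_subset _ _)
        (fun i _ _ => Finset.sum_nonneg fun p _ => sq_nonneg _)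
    refine le_trans (le_of_eq ?_) h1
    have h2 : ∀ i ∈ F, ∀ p : Fin m,
        (∑ j, (A - X) p j * b i j) = ∑ k, (σ k * ip k i) * u k p := by
      intro i hi p
      have hiF : (i : ℕ) < d := by
        rw [hF] at hi
        simpa using hi
      have h3 : (∑ j, (A - X) p j * b i j)
          = (∑ j, A p j * b i j) - ∑ j, X p j * b i j := by
        rw [← Finset.sum_sub_distrib]
        refine Finset.sum_congr rfl fun j _ => ?_
        rw [Matrix.sub_apply]
        ring
      rw [h3, hbK i hiF p, sub_zero, hact i p]
    calc (∑ k, σ k ^ 2 * t k)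
        = ∑ k, ∑ i ∈ F, (σ k * ip k i) ^ 2 := by
          refine Finset.sum_congr rfl fun k _ => ?_
          rw [htdef]
          simp only
          rw [Finset.mul_sum]
          exact Finset.sum_congr rfl fun i _ => (mul_pow _ _ _).symm
      _ = ∑ i ∈ F, ∑ k, (σ k * ip k i) ^ 2 := Finset.sum_comm
      _ = ∑ i ∈ F, ∑ p, (∑ j, (A - X) p j * b i j) ^ 2 := by
          refine Finset.sum_congr rfl fun i hi => ?_
          have h3 := cross_sum u hu (fun k => σ k * ip k i) (fun k => σ k * ip k i)
          calc (∑ k, (σ k * ip k i) ^ 2)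
              = ∑ k, (σ k * ip k i) * (σ k * ip k i) :=
                Finset.sum_congr rfl fun k _ => pow_two _
            _ = ∑ p, (∑ k, (σ k * ip k i) * u k p) * (∑ l, (σ l * ip l i) * u l p) :=
                h3.symm
            _ = ∑ p, (∑ j, (A - X) p j * b i j) ^ 2 := by
                refine Finset.sum_congr rfl fun p _ => ?_
                rw [h2 i hi p, pow_two]
  calc frobSq (A - B) = ∑ k : Fin r, if r' ≤ (k : ℕ) then σ k ^ 2 else 0 := part3
    _ ≤ ∑ k, σ k ^ 2 * t k := comb σ hσpos hσmono r' hr' t ht0 ht1 hsum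
    _ ≤ frobSq (A - X) := key
end

section
/- The 3D tensor |ξ̂_n| with entries |n_1 ξ_1(i) + n_2 ξ_2(j) + n_3 ξ_3(k)| on a symmetric grid ξ_α(i) = -ξ_max + (i-1)Δξ generically has unfolding rank growing with the grid size: specifically, for n = (1,1,0)/√2 and the grid {−(N−1)/2,…,(N−1)/2}·Δξ in each direction, the N×N matrix M(i,j) = |ξ(i) + ξ(j)| has rank at least N/2. -/
open Matrix

/-- Second difference of the integer absolute value: for an integer-valued real
`t` (cast from `ℤ`), `|t+1| - 2|t| + |t-1|` is `2` if `t = 0` and `0` otherwise. -/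
lemma abs_second_diff (m : ℤ) :
    |((m : ℝ) + 1)| - 2 * |(m : ℝ)| + |((m : ℝ) - 1)| = if m = 0 then 2 else 0 := by
  rcases lt_trichotomy m 0 with h | h | h
  · have h1 : (m : ℝ) + 1 ≤ 0 := by exact_mod_cast (by omega : m + 1 ≤ 0)
    rw [if_neg h.ne]
    rw [abs_of_nonpos (by linarith), abs_of_nonpos (by linarith), abs_of_nonpos (by linarith)]
    ring
  · subst h; norm_num
  · have h1 : (1 : ℝ) ≤ (m : ℝ) := by exact_mod_cast h
    rw [if_neg h.ne']
    rw [abs_of_nonneg (by linarith), abs_of_nonneg (by linarith), abs_of_nonneg (by linarith)]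
    ring

/-- **The |ξ̂_n| tensor has large unfolding rank.** For the normal
`n = (1,1,0)/√2` and the symmetric grid `ξ(i) = (i - (N+1)/2)Δξ`, `i = 1,…,N`,
the `N×N` unfolding matrix `M(i,j) = |ξ(i) + ξ(j)|/√2` has rank at least `N/2`;
hence `|ξ̂_n|` cannot be represented exactly with small TT-ranks. -/
theorem abs_xi_n_matrix_rank_ge (N : ℕ) (Δξ : ℝ) (hΔξ : 0 < Δξ)
    (M : Matrix (Fin N) (Fin N) ℝ)
    (hM : ∀ i j : Fin N, M i j = (Real.sqrt 2)⁻¹ *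
      |(((i : ℝ) + 1) - ((N : ℝ) + 1) / 2) * Δξ +
        (((j : ℝ) + 1) - ((N : ℝ) + 1) / 2) * Δξ|) :
    N / 2 ≤ M.rank := by
  -- trivial for N ≤ 1
  rcases Nat.lt_or_ge N 2 with hN | hN
  · interval_cases N <;> simp
  set c : ℝ := (Real.sqrt 2)⁻¹ * Δξ with hc
  have hs2 : (0:ℝ) < Real.sqrt 2 := Real.sqrt_pos.mpr (by norm_num)
  have hcpos : 0 < c := mul_pos (inv_pos.mpr hs2) hΔξ
  -- normalize the matrix entries
  have hM' : ∀ i j : Fin N, M i j = c * |((i : ℝ) + (j : ℝ) + 1 - N)| := by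
    intro i j
    rw [hM]
    have : (((i : ℝ) + 1) - ((N : ℝ) + 1) / 2) * Δξ +
        (((j : ℝ) + 1) - ((N : ℝ) + 1) / 2) * Δξ
        = (((i : ℝ) + (j : ℝ) + 1 - N)) * Δξ := by ring
    rw [this, abs_mul, abs_of_pos hΔξ, hc]
    ring
  -- key: the standard basis vectors e_k, 1 ≤ k ≤ N-2, lie in the range of M
  have key : ∀ k : Fin N, 1 ≤ (k : ℕ) → (k : ℕ) ≤ N - 2 →
      (Pi.single k 1 : Fin N → ℝ) ∈ LinearMap.range M.mulVecLin := by
    intro k hk1 hk2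
    -- use columns j-1, j, j+1 where j = N-1-k
    have hkN : (k : ℕ) + 2 ≤ N := by omega
    set jv : ℕ := N - 1 - (k : ℕ) with hjv
    have hj1 : 1 ≤ jv := by omega
    have hj2 : jv + 1 ≤ N - 1 := by omega
    let jm : Fin N := ⟨jv - 1, by omega⟩
    let j0 : Fin N := ⟨jv, by omega⟩
    let jp : Fin N := ⟨jv + 1, by omega⟩
    refine ⟨(2*c)⁻¹ • (Pi.single jm (1:ℝ) + Pi.single jp (1:ℝ) - Pi.single j0 (2:ℝ)), ?_⟩
    rw [LinearMap.map_smul]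
    have hvec : M.mulVecLin (Pi.single jm (1:ℝ) + Pi.single jp (1:ℝ) - Pi.single j0 (2:ℝ))
        = (2*c) • (Pi.single k 1 : Fin N → ℝ) := by
      funext i
      simp only [map_add, map_sub, mulVecLin_apply, mulVec_single]
      simp only [Pi.add_apply, Pi.sub_apply, Pi.smul_apply, op_smul_eq_mul, col_apply, smul_eq_mul, mul_one]
      rw [hM' i jm, hM' i jp, hM' i j0]
      have hjm : ((jm : ℕ) : ℝ) = (jv : ℝ) - 1 := by
        have : (jm : ℕ) = jv - 1 := rfl
        rw [this]; push_cast [Nat.cast_sub hj1]; ring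
      have hjp : ((jp : ℕ) : ℝ) = (jv : ℝ) + 1 := by push_cast [jp]; ring
      have hj0 : ((j0 : ℕ) : ℝ) = (jv : ℝ) := rfl
      rw [hjm, hjp, hj0]
      have habs := abs_second_diff ((i : ℕ) + jv + 1 - N : ℤ)
      have hcast : (((i : ℕ) + jv + 1 - N : ℤ) : ℝ) = (i : ℝ) + (jv : ℝ) + 1 - N := by
        push_cast; ring
      rw [hcast] at habs
      have e1 : (i : ℝ) + ((jv : ℝ) - 1) + 1 - N = ((i : ℝ) + (jv : ℝ) + 1 - N) - 1 := by ring
      have e2 : (i : ℝ) + ((jv : ℝ) + 1) + 1 - N = ((i : ℝ) + (jv : ℝ) + 1 - N) + 1 := by ring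
      rw [e1, e2]
      have lhs_eq : c * |(i : ℝ) + (jv : ℝ) + 1 - N - 1| + c * |(i : ℝ) + (jv : ℝ) + 1 - N + 1|
          - c * |(i : ℝ) + (jv : ℝ) + 1 - N| * 2
          = c * (|((i : ℝ) + (jv : ℝ) + 1 - N) + 1| - 2 * |(i : ℝ) + (jv : ℝ) + 1 - N|
              + |((i : ℝ) + (jv : ℝ) + 1 - N) - 1|) := by ring
      rw [lhs_eq, habs]
      by_cases hik : i = k
      · subst hik
        have : ((i : ℕ) : ℤ) + (jv : ℤ) + 1 - (N : ℤ) = 0 := by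
          have : (i : ℕ) + jv + 1 = N := by omega
          omega
        rw [if_pos (by exact_mod_cast this)]
        simp [Pi.single_apply]
        ring
      · have hne : ((i : ℕ) + (jv : ℕ) + 1 - N : ℤ) ≠ 0 := by
          intro h
          apply hik
          have : (i : ℕ) = (k : ℕ) := by omega
          exact Fin.ext this
        rw [if_neg hne]
        have : (Pi.single k 1 : Fin N → ℝ) i = 0 := Pi.single_eq_of_ne hik 1
        rw [this]
        ring
    rw [hvec, smul_smul, inv_mul_cancel₀ (by positivity), one_smul]
  -- for N ≥ 2, the rank is positive
  have hrank1 : 1 ≤ M.rank := by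
    have hne : M.mulVecLin (Pi.single ⟨0, by omega⟩ 1) ≠ 0 := by
      intro h
      have h0 := congrFun h ⟨0, by omega⟩
      simp only [mulVecLin_apply, mulVec_single, Pi.smul_apply, op_smul_eq_mul, col_apply, mul_one, Pi.zero_apply] at h0
      rw [hM'] at h0
      have : |((⟨0, by omega⟩ : Fin N) : ℝ) + ((⟨0, by omega⟩ : Fin N) : ℝ) + 1 - N| ≠ 0 := by
        simp only [Fin.val_mk, Nat.cast_zero]
        rw [abs_ne_zero]
        have : (2:ℝ) ≤ (N:ℝ) := by exact_mod_cast hN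
        intro h; linarith
      exact this (by
        rcases mul_eq_zero.mp h0 with h | h
        · exact absurd h hcpos.ne'
        · exact absurd h this)
    have : Nontrivial (LinearMap.range M.mulVecLin) := by
      refine nontrivial_of_ne
        ⟨M.mulVecLin (Pi.single ⟨0, by omega⟩ 1), LinearMap.mem_range_self _ _⟩ 0 ?_
      simp only [ne_eq, Submodule.mk_eq_zero]
      exact hne
    exact (Module.finrank_pos_iff (R := ℝ)).mpr this
  rcases Nat.lt_or_ge N 4 with hN4 | hN4
  · -- N = 2 or 3 : N / 2 = 1
    omega
    -- fallback below (unreachable)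
  · -- N ≥ 4 : rank ≥ N - 2 ≥ N / 2
    have hle : N / 2 ≤ N - 2 := by omega
    refine le_trans hle ?_
    -- family of basis vectors indexed by Fin (N-2)
    let f : Fin (N - 2) → Fin N := fun a => ⟨(a : ℕ) + 1, by omega⟩
    have hf : Function.Injective f := by
      intro a b hab
      have : (a : ℕ) + 1 = (b : ℕ) + 1 := congrArg Fin.val hab
      exact Fin.ext (by omega)
    have hli : LinearIndependent ℝ (fun a : Fin (N - 2) => (Pi.single (f a) 1 : Fin N → ℝ)) := by
      have hb := (Pi.basisFun ℝ (Fin N)).linearIndependent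
      have := hb.comp f hf
      simpa [Function.comp_def, Pi.basisFun_apply] using this
    have hspan : Submodule.span ℝ
        (Set.range (fun a : Fin (N - 2) => (Pi.single (f a) 1 : Fin N → ℝ)))
        ≤ LinearMap.range M.mulVecLin := by
      rw [Submodule.span_le]
      rintro _ ⟨a, rfl⟩
      exact key (f a) (by simp [f]) (by simpa [f] using (by have := a.isLt; omega : (a : ℕ) + 1 ≤ N - 2))
    have hdim : Module.finrank ℝ (Submodule.span ℝ
        (Set.range (fun a : Fin (N - 2) => (Pi.single (f a) 1 : Fin N → ℝ)))) = N - 2 := by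
      rw [finrank_span_eq_card hli, Fintype.card_fin]
    calc N - 2 = Module.finrank ℝ (Submodule.span ℝ
          (Set.range (fun a : Fin (N - 2) => (Pi.single (f a) 1 : Fin N → ℝ)))) := hdim.symm
      _ ≤ Module.finrank ℝ (LinearMap.range M.mulVecLin) := Submodule.finrank_mono hspan
      _ = M.rank := rfl
end
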